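/- arXiv:1307.6610 — 2 statements merged into one kernel-verified Lean document; each statement's English description precedes it below -/
import Mathlib

section
/- Let ν = δ₁ (Dirac at 1) and let P = e^{-1} Σ_{k≥0} δ_k / k! be the Poisson(1) distribution. Define (A* g)(x) = e^{-1} Σ_{k≥0} g(x + k)/k! for g : ℝ → ℝ. Then the function g = 1_{{0}} − 2·1_{{1}} + 2·1_{{2}} is a nonzero element of L²₀(P) with (A* g)(1) = 0 and A* g = 0 ν-a.e.; in particular A* is not injective on L²₀(P). -/
open MeasureTheory

/-- The Poisson(1) distribution `P = e⁻¹ ∑ δ_k / k!`. -/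
noncomputable def poissonOne : Measure ℝ :=
  Measure.sum fun k : ℕ =>
    (ENNReal.ofReal (Real.exp (-1) / (Nat.factorial k))) • Measure.dirac (k : ℝ)

/-- The counterexample function `g = 1_{0} − 2·1_{1} + 2·1_{2}`. -/
noncomputable def gPoisson : ℝ → ℝ := fun x =>
  if x = 0 then 1 else if x = 1 then -2 else if x = 2 then 2 else 0

/-- The adjoint score operator `(A⋆ g)(x) = e⁻¹ ∑ g(x+k)/k!` of the Poisson model. -/
noncomputable def AstarPoisson (g : ℝ → ℝ) : ℝ → ℝ := fun x =>
  Real.exp (-1) * ∑' k : ℕ, g (x + k) / (Nat.factorial k)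

lemma gPoisson_measurable : Measurable gPoisson := by
  unfold gPoisson
  refine Measurable.ite (measurableSet_singleton 0) measurable_const ?_
  refine Measurable.ite (measurableSet_singleton 1) measurable_const ?_
  exact Measurable.ite (measurableSet_singleton 2) measurable_const measurable_const

lemma gPoisson_abs_le (x : ℝ) : ‖gPoisson x‖ ≤ 2 := by
  unfold gPoisson
  split_ifs <;> norm_num

instance poissonOne_finite : IsFiniteMeasure poissonOne := by
  constructor
  rw [poissonOne, Measure.sum_apply _ MeasurableSet.univ]
  simp only [Measure.smul_apply, Measure.dirac_apply' _ MeasurableSet.univ,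
    Set.indicator_univ, Pi.one_apply, smul_eq_mul, mul_one]
  have hsum : Summable (fun k : ℕ => Real.exp (-1) / (Nat.factorial k)) := by
    have := (Real.summable_pow_div_factorial 1).mul_left (Real.exp (-1))
    simpa [div_eq_mul_inv] using this
  rw [← ENNReal.ofReal_tsum_of_nonneg (fun k => by positivity) hsum]
  exact ENNReal.ofReal_lt_top

lemma gPoisson_memℒp : MemLp gPoisson 2 poissonOne :=
  MemLp.of_bound (gPoisson_measurable.aestronglyMeasurable) 2
    (Filter.Eventually.of_forall gPoisson_abs_le)

lemma gPoisson_integrable : Integrable gPoisson poissonOne :=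
  gPoisson_memℒp.integrable (by norm_num)

lemma natcast_eq_iff (k n : ℕ) : ((k : ℝ) = n) ↔ k = n := Nat.cast_inj

lemma gPoisson_nat (k : ℕ) (hk : 3 ≤ k) : gPoisson k = 0 := by
  unfold gPoisson
  have h0 : (k : ℝ) ≠ 0 := Nat.cast_ne_zero.mpr (by omega)
  have h1 : (k : ℝ) ≠ 1 := by
    exact_mod_cast (show (k : ℝ) ≠ (1:ℕ) from Nat.cast_injective.ne (by omega))
  have h2 : (k : ℝ) ≠ 2 := by
    exact_mod_cast (show (k : ℝ) ≠ (2:ℕ) from Nat.cast_injective.ne (by omega))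
  simp [h0, h1, h2]

lemma gPoisson_integral : (∫ x, gPoisson x ∂poissonOne) = 0 := by
  rw [poissonOne, integral_sum_measure (by rw [← poissonOne]; exact gPoisson_integrable)]
  have hterm : ∀ k : ℕ,
      (∫ x, gPoisson x ∂((ENNReal.ofReal (Real.exp (-1) / (Nat.factorial k))) •
        Measure.dirac (k : ℝ)))
      = Real.exp (-1) / (Nat.factorial k) * gPoisson k := by
    intro k
    rw [integral_smul_measure, integral_dirac]
    rw [ENNReal.toReal_ofReal (by positivity)]
    rfl
  simp only [hterm]
  rw [tsum_eq_sum (s := Finset.range 3)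
    (fun k hk => by rw [gPoisson_nat k (by simpa using hk)]; ring)]
  have : ∀ x ∈ Finset.range 3, True := fun _ _ => trivial
  simp [Finset.sum_range_succ, gPoisson]
  ring

lemma gPoisson_not_ae_zero : ¬ (∀ᵐ x ∂poissonOne, gPoisson x = 0) := by
  intro h
  have h0 : poissonOne {x | ¬ gPoisson x = 0} = 0 := h
  have hsub : ({(0:ℝ)} : Set ℝ) ⊆ {x | ¬ gPoisson x = 0} := by
    intro x hx
    simp only [Set.mem_singleton_iff] at hx
    subst hx
    simp [gPoisson]
  have hle : poissonOne {(0:ℝ)} ≤ poissonOne {x | ¬ gPoisson x = 0} :=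
    measure_mono hsub
  have hpos : 0 < poissonOne {(0:ℝ)} := by
    rw [poissonOne, Measure.sum_apply _ (measurableSet_singleton 0)]
    refine lt_of_lt_of_le ?_ (ENNReal.le_tsum 0)
    simp only [Measure.smul_apply, Nat.cast_zero, Nat.factorial_zero, Nat.cast_one, div_one,
      Measure.dirac_apply' _ (measurableSet_singleton 0)]
    simp [Set.indicator_of_mem, ENNReal.ofReal_pos, Real.exp_pos]
  rw [h0] at hle
  exact absurd (le_antisymm hle zero_le) (ne_of_gt hpos)

lemma Astar_one : AstarPoisson gPoisson 1 = 0 := by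
  unfold AstarPoisson
  have hz : ∀ k : ℕ, k ∉ Finset.range 2 → gPoisson (1 + k) / (Nat.factorial k) = 0 := by
    intro k hk
    simp only [Finset.mem_range, not_lt] at hk
    have : (1 : ℝ) + k = ((1 + k : ℕ) : ℝ) := by push_cast; ring
    rw [this, gPoisson_nat (1 + k) (by omega), zero_div]
  rw [tsum_eq_sum hz]
  norm_num [Finset.sum_range_succ, gPoisson]

/-- In the Poisson model with `ν = δ₁`, the adjoint score operator is not injective
on `L²₀(P)`: the nonzero centered function `gPoisson` satisfies `A⋆ g = 0` `ν`-a.e. -/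
theorem poisson_adjoint_score_not_injective :
    MemLp gPoisson 2 poissonOne ∧
    (∫ x, gPoisson x ∂poissonOne) = 0 ∧
    ¬ (∀ᵐ x ∂poissonOne, gPoisson x = 0) ∧
    AstarPoisson gPoisson 1 = 0 ∧
    (∀ᵐ x ∂(Measure.dirac (1 : ℝ)), AstarPoisson gPoisson x = 0) := by
  refine ⟨gPoisson_memℒp, gPoisson_integral, gPoisson_not_ae_zero, Astar_one, ?_⟩
  rw [ae_dirac_eq]
  exact Filter.eventually_pure.mpr Astar_one
end

section
/- Let ν = δ₀ and μ = N(0,1), so P = ν ∗ μ = N(0,1). The function g(x) = x³ is a nonzero element of L²₀(P), and (A* g)(x) = E[(x + ε)³] = x³ + 3x (with ε ∼ N(0,1)) vanishes at x = 0, hence A* g = 0 ν-almost everywhere. Thus nonvanishing of the error characteristic function alone does not imply injectivity of the adjoint score operator on L²₀(P) as a map into L²(ν). -/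
open MeasureTheory ProbabilityTheory Real Filter ENNReal NNReal

noncomputable def Egauss (x : ℝ) : ℝ := Real.exp (-(2⁻¹ : ℝ) * x ^ 2)

lemma intEk (k : ℕ) : Integrable (fun x : ℝ => x ^ k * Egauss x) := by
  have h := integrable_rpow_mul_exp_neg_mul_sq (b := (2⁻¹ : ℝ)) (by norm_num)
    (s := (k : ℝ)) (by exact lt_of_lt_of_le (by norm_num) (Nat.cast_nonneg k))
  simpa [Egauss, Real.rpow_natCast] using h

lemma hasDerivAt_Egauss (x : ℝ) : HasDerivAt Egauss (-x * Egauss x) x := by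
  have h1 : HasDerivAt (fun x : ℝ => -(2⁻¹ : ℝ) * x ^ 2) (-x) x := by
    have := (hasDerivAt_pow 2 x).const_mul (-(2⁻¹ : ℝ))
    refine this.congr_deriv ?_
    push_cast; ring
  have := h1.exp
  refine this.congr_deriv ?_
  simp [Egauss]; ring

lemma M0 : ∫ x : ℝ, Egauss x = Real.sqrt (2 * π) := by
  have := integral_gaussian (2⁻¹ : ℝ)
  simp only [Egauss]
  rw [this]
  congr 1
  ring

lemma M1 : ∫ x : ℝ, x * Egauss x = 0 := by
  have hderiv : ∀ x : ℝ, HasDerivAt (fun x => -Egauss x) (x * Egauss x) x := by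
    intro x
    have := (hasDerivAt_Egauss x).neg
    refine this.congr_deriv ?_; ring
  have hint : Integrable (fun x : ℝ => x * Egauss x) := by simpa using intEk 1
  have hf : Integrable (fun x : ℝ => -Egauss x) := by
    have : Integrable Egauss := by simpa using intEk 0
    exact this.neg
  exact integral_eq_zero_of_hasDerivAt_of_integrable hderiv hint hf

lemma M2 : ∫ x : ℝ, x ^ 2 * Egauss x = Real.sqrt (2 * π) := by
  have hderiv : ∀ x : ℝ, HasDerivAt (fun x => -(x * Egauss x))
      (x ^ 2 * Egauss x - Egauss x) x := by
    intro x
    have := ((hasDerivAt_id x).mul (hasDerivAt_Egauss x)).neg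
    refine this.congr_deriv ?_; simp [id_eq]; ring
  have hE : Integrable Egauss := by simpa using intEk 0
  have h1 : Integrable (fun x : ℝ => x * Egauss x) := by simpa using intEk 1
  have h := integral_eq_zero_of_hasDerivAt_of_integrable hderiv
    ((intEk 2).sub hE) h1.neg
  rw [integral_sub (intEk 2) hE] at h
  rw [sub_eq_zero.mp h, M0]

lemma M3 : ∫ x : ℝ, x ^ 3 * Egauss x = 0 := by
  have hderiv : ∀ x : ℝ, HasDerivAt (fun x => -(x ^ 2 * Egauss x))
      (x ^ 3 * Egauss x - 2 * (x * Egauss x)) x := by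
    intro x
    have := ((hasDerivAt_pow 2 x).mul (hasDerivAt_Egauss x)).neg
    refine this.congr_deriv ?_; push_cast; ring
  have h1 : Integrable (fun x : ℝ => x * Egauss x) := by simpa using intEk 1
  have h := integral_eq_zero_of_hasDerivAt_of_integrable hderiv
    ((intEk 3).sub (h1.const_mul 2)) (intEk 2).neg
  rw [integral_sub (intEk 3) (h1.const_mul 2), integral_const_mul, M1] at h
  simpa using h

lemma pdf_eq : gaussianPDFReal 0 1 = fun x => (Real.sqrt (2 * π))⁻¹ * Egauss x := by
  ext x
  simp only [gaussianPDFReal, Egauss, NNReal.coe_one, mul_one, sub_zero]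
  congr 2
  ring

lemma gauss_eq_withDensity :
    gaussianReal 0 1 = volume.withDensity
      (fun x => ((gaussianPDFReal 0 1 x).toNNReal : ℝ≥0∞)) := by
  rw [gaussianReal_of_var_ne_zero 0 one_ne_zero]
  rfl

lemma gauss_integral (g : ℝ → ℝ) :
    ∫ x, g x ∂(gaussianReal 0 1) = ∫ x, g x * gaussianPDFReal 0 1 x := by
  rw [gauss_eq_withDensity,
    integral_withDensity_eq_integral_smul ((measurable_gaussianPDFReal 0 1).real_toNNReal)]
  congr 1; ext x
  rw [NNReal.smul_def, Real.coe_toNNReal _ (gaussianPDFReal_nonneg 0 1 x), smul_eq_mul,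
    mul_comm]

lemma intEkP (k : ℕ) : Integrable (fun x : ℝ => x ^ k * gaussianPDFReal 0 1 x) := by
  rw [pdf_eq]
  exact ((intEk k).const_mul (Real.sqrt (2 * π))⁻¹).congr
    (by filter_upwards with x; ring)

lemma MkP (k : ℕ) :
    ∫ x, x ^ k ∂(gaussianReal 0 1)
      = (Real.sqrt (2 * π))⁻¹ * ∫ x : ℝ, x ^ k * Egauss x := by
  rw [gauss_integral, pdf_eq, ← integral_const_mul]
  congr 1; ext x; ring

lemma sqrt2pi_pos : 0 < Real.sqrt (2 * π) := Real.sqrt_pos.mpr (by positivity)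

/-- With `ν = δ₀` and `μ = N(0,1)` (so `P = ν ∗ μ = N(0,1)`), the function
`g(x) = x³` is a nonzero element of `L²₀(P)`, yet its image under the adjoint
score operator `(A⋆ g)(x) = ∫ (x+y)³ dμ(y) = x³ + 3x` vanishes `ν`-a.e.
Hence nonvanishing of the Gaussian characteristic function does not imply
injectivity of `A⋆` on `L²₀(P)`. -/
theorem gaussian_adjoint_score_not_injective :
    MemLp (fun x : ℝ => x ^ 3) 2 (gaussianReal 0 1) ∧
    (∫ x, x ^ 3 ∂(gaussianReal 0 1)) = 0 ∧
    ¬ (∀ᵐ x ∂(gaussianReal 0 1), x ^ 3 = (0 : ℝ)) ∧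
    (∀ x : ℝ, ∫ y, (x + y) ^ 3 ∂(gaussianReal 0 1) = x ^ 3 + 3 * x) ∧
    (∫ y, (0 + y) ^ 3 ∂(gaussianReal 0 1)) = 0 ∧
    (∀ᵐ x ∂(Measure.dirac (0 : ℝ)), ∫ y, (x + y) ^ 3 ∂(gaussianReal 0 1) = 0) := by
  have c0 : (Real.sqrt (2 * π))⁻¹ * Real.sqrt (2 * π) = 1 :=
    inv_mul_cancel₀ (ne_of_gt sqrt2pi_pos)
  have hM1 : ∫ x, x ∂(gaussianReal 0 1) = 0 := by
    have := MkP 1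
    simp only [pow_one] at this
    rw [this, M1, mul_zero]
  have hM2 : ∫ x, x ^ 2 ∂(gaussianReal 0 1) = 1 := by rw [MkP 2, M2, c0]
  have hM3 : ∫ x, x ^ 3 ∂(gaussianReal 0 1) = 0 := by rw [MkP 3, M3, mul_zero]
  have hIk : ∀ k : ℕ, Integrable (fun x : ℝ => x ^ k) (gaussianReal 0 1) := by
    intro k
    rw [gauss_eq_withDensity, integrable_withDensity_iff
      ((measurable_gaussianPDFReal 0 1).real_toNNReal.coe_nnreal_ennreal)
      (by filter_upwards with x using ENNReal.coe_lt_top)]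
    exact (intEkP k).congr (by
      filter_upwards with x
      rw [ENNReal.coe_toReal, Real.coe_toNNReal _ (gaussianPDFReal_nonneg 0 1 x)])
  have key : ∀ x : ℝ, ∫ y, (x + y) ^ 3 ∂(gaussianReal 0 1) = x ^ 3 + 3 * x := by
    intro x
    have expand : (fun y : ℝ => (x + y) ^ 3)
        = fun y => x ^ 3 + (3 * x ^ 2 * y + (3 * x * y ^ 2 + y ^ 3)) := by
      ext y; ring
    have i1 : Integrable (fun _ : ℝ => x ^ 3) (gaussianReal 0 1) := integrable_const _
    have i2 : Integrable (fun y : ℝ => 3 * x ^ 2 * y) (gaussianReal 0 1) := by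
      simpa using (hIk 1).const_mul (3 * x ^ 2)
    have i3 : Integrable (fun y : ℝ => 3 * x * y ^ 2) (gaussianReal 0 1) :=
      (hIk 2).const_mul _
    have i4 : Integrable (fun y : ℝ => y ^ 3) (gaussianReal 0 1) := hIk 3
    have i34 : Integrable (fun y : ℝ => 3 * x * y ^ 2 + y ^ 3) (gaussianReal 0 1) := i3.add i4
    have i234 : Integrable (fun y : ℝ => 3 * x ^ 2 * y + (3 * x * y ^ 2 + y ^ 3))
        (gaussianReal 0 1) := i2.add i34
    rw [expand, integral_add i1 i234, integral_add i2 i34,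
      integral_add i3 i4, integral_const_mul, integral_const_mul]
    have h1 : ∫ (y : ℝ), y ∂(gaussianReal 0 1) = 0 := hM1
    rw [h1, hM2, hM3]
    simp [measure_univ]
  refine ⟨?_, hM3, ?_, key, ?_, ?_⟩
  · rw [memLp_two_iff_integrable_sq (by fun_prop)]
    have : (fun x : ℝ => (x ^ 3) ^ 2) = fun x : ℝ => x ^ 6 := by ext x; ring
    rw [this]
    exact hIk 6
  · intro h
    have h0 : (gaussianReal 0 1) {x : ℝ | ¬ x ^ 3 = 0} = 0 := h
    have hset : {x : ℝ | ¬ x ^ 3 = 0} = ({0} : Set ℝ)ᶜ := by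
      ext x; simp [pow_eq_zero_iff]
    rw [hset] at h0
    have hsing : (gaussianReal 0 1) {(0 : ℝ)} = 0 :=
      gaussianReal_absolutelyContinuous 0 one_ne_zero (by simp)
    have huniv : (gaussianReal 0 1) Set.univ = 0 := by
      have := measure_union_le (μ := gaussianReal 0 1) ({0} : Set ℝ) ({0} : Set ℝ)ᶜ
      rw [Set.union_compl_self, hsing, h0] at this
      exact le_antisymm (by simpa using this) (zero_le ..)
    simp [measure_univ] at huniv
  · simpa using key 0
  · rw [MeasureTheory.ae_dirac_eq, Filter.eventually_pure]
    simpa using key 0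
end
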